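/- If U is a unitary matrix with spectral decomposition U = Σ_r λ_r F_r (distinct eigenvalues λ_r, orthogonal spectral projections F_r), then for any unit vector v, the Cesàro time average (1/T) Σ_{t=0}^{T-1} (U^t v) ∘ conj(U^t v) converges as T → ∞ to Σ_r (F_r v) ∘ conj(F_r v), where ∘ denotes the entrywise (Hadamard) product. -/

import Mathlib

open Matrix BigOperators Filter

lemma cesaro_geom (μ : ℂ) (hμ : ‖μ‖ = 1) :
    Tendsto (fun T : ℕ => (T : ℂ)⁻¹ * ∑ t ∈ Finset.range T, μ ^ t) atTop
      (nhds (if μ = 1 then 1 else 0)) := by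
  by_cases h : μ = 1
  · simp only [h, if_true, one_pow, Finset.sum_const, Finset.card_range, nsmul_eq_mul, mul_one]
    apply Tendsto.congr' ?_ tendsto_const_nhds
    filter_upwards [eventually_ge_atTop 1] with T hT
    have hT0 : (T : ℂ) ≠ 0 := Nat.cast_ne_zero.mpr (Nat.one_le_iff_ne_zero.mp hT)
    field_simp
  · simp only [h, if_false]
    have hμ1 : (0:ℝ) < ‖μ - 1‖ := by
      simpa using sub_ne_zero.mpr h
    refine squeeze_zero_norm (a := fun T : ℕ => (T : ℝ)⁻¹ * (2 / ‖μ - 1‖)) ?_ ?_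
    · intro T
      rw [norm_mul, norm_inv, Complex.norm_natCast]
      have hb : ‖∑ t ∈ Finset.range T, μ ^ t‖ ≤ 2 / ‖μ - 1‖ := by
        rw [geom_sum_eq h, norm_div]
        gcongr
        exact (norm_sub_le (μ ^ T) 1).trans (by rw [norm_pow, hμ]; norm_num)
      exact mul_le_mul_of_nonneg_left hb (by positivity)
    · have h1 : Tendsto (fun T : ℕ => (T : ℝ)⁻¹) atTop (nhds 0) :=
        tendsto_inv_atTop_zero.comp tendsto_natCast_atTop_atTop
      simpa using h1.mul_const (2 / ‖μ - 1‖)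

/-- For a unitary `U` with spectral decomposition `U = Σ_r λ_r F_r`
(distinct unit-modulus eigenvalues, orthogonal spectral projections), and any unit
vector `v`, the Cesàro average `(1/T) Σ_{t<T} (U^t v) ∘ conj(U^t v)` converges to
`Σ_r (F_r v) ∘ conj(F_r v)`. -/
theorem cesaro_average_of_unitary
    (N m : ℕ)
    (U : Matrix (Fin N) (Fin N) ℂ)
    (hU : U ∈ Matrix.unitaryGroup (Fin N) ℂ)
    (lam : Fin m → ℂ)
    (hlam_mod : ∀ r, ‖lam r‖ = 1)
    (hlam_inj : Function.Injective lam)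
    (F : Fin m → Matrix (Fin N) (Fin N) ℂ)
    (hdecomp : U = ∑ r, lam r • F r)
    (horth : ∀ r s, r ≠ s → F r * F s = 0)
    (hidem : ∀ r, F r * F r = F r)
    (hherm : ∀ r, (F r)ᴴ = F r)
    (hsum : ∑ r, F r = 1)
    (v : Fin N → ℂ)
    (hv : ‖v‖ = 1) :
    Tendsto
      (fun T : ℕ => fun i : Fin N =>
        (T : ℂ)⁻¹ * ∑ t ∈ Finset.range T,
          ((U ^ t).mulVec v i * star ((U ^ t).mulVec v i)))
      atTop
      (nhds (fun i : Fin N => ∑ r, ((F r).mulVec v i * star ((F r).mulVec v i)))) := by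
  -- powers of U
  have hpow : ∀ t : ℕ, U ^ t = ∑ r, (lam r ^ t) • F r := by
    intro t
    induction t with
    | zero => simp [hsum]
    | succ t ih =>
      rw [pow_succ, ih, hdecomp, Finset.sum_mul_sum]
      refine Finset.sum_congr rfl fun r _ => ?_
      rw [Finset.sum_eq_single r]
      · rw [smul_mul_smul_comm, hidem r, pow_succ]
      · intro s _ hs
        rw [smul_mul_smul_comm, horth r s (Ne.symm hs), smul_zero]
      · intro hr; exact absurd (Finset.mem_univ r) hr
  have hUv : ∀ (t : ℕ) (i : Fin N), (U ^ t).mulVec v i = ∑ r, lam r ^ t * (F r).mulVec v i := by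
    intro t i
    rw [hpow t]
    simp only [Matrix.mulVec, dotProduct, Matrix.sum_apply, Matrix.smul_apply,
      smul_eq_mul, Finset.sum_mul]
    rw [Finset.sum_comm]
    exact Finset.sum_congr rfl fun r _ => by rw [Finset.mul_sum]; exact Finset.sum_congr rfl fun j _ => by ring
  rw [tendsto_pi_nhds]
  intro i
  -- rewrite the sequence
  have key : ∀ T : ℕ, (T : ℂ)⁻¹ * ∑ t ∈ Finset.range T,
      ((U ^ t).mulVec v i * star ((U ^ t).mulVec v i))
      = ∑ r, ∑ s, ((F r).mulVec v i * star ((F s).mulVec v i)) *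
          ((T : ℂ)⁻¹ * ∑ t ∈ Finset.range T, (lam r * star (lam s)) ^ t) := by
    intro T
    have h1 : ∀ t : ℕ, (U ^ t).mulVec v i * star ((U ^ t).mulVec v i)
        = ∑ r, ∑ s, ((F r).mulVec v i * star ((F s).mulVec v i)) * (lam r * star (lam s)) ^ t := by
      intro t
      rw [hUv t i, star_sum, Finset.sum_mul_sum]
      refine Finset.sum_congr rfl fun r _ => Finset.sum_congr rfl fun s _ => ?_
      rw [star_mul', star_pow, mul_pow]
      ring
    simp only [h1, Finset.mul_sum]
    conv_lhs => rw [Finset.sum_comm]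
    refine Finset.sum_congr rfl fun r _ => ?_
    rw [Finset.sum_comm]
    refine Finset.sum_congr rfl fun s _ => Finset.sum_congr rfl fun t _ => by ring
  -- convergence of each term
  have hconv : ∀ r s : Fin m,
      Tendsto (fun T : ℕ => (T : ℂ)⁻¹ * ∑ t ∈ Finset.range T, (lam r * star (lam s)) ^ t)
        atTop (nhds (if r = s then 1 else 0)) := by
    intro r s
    have hmod : ‖lam r * star (lam s)‖ = 1 := by
      simp [Complex.star_def, norm_mul, Complex.norm_conj, hlam_mod]
    have hss : lam s * star (lam s) = 1 := by
      rw [Complex.star_def, Complex.mul_conj, Complex.normSq_eq_norm_sq, hlam_mod]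
      norm_num
    have hiff : lam r * star (lam s) = 1 ↔ r = s := by
      constructor
      · intro h1
        apply hlam_inj
        have hstar : star (lam s) ≠ 0 := by
          intro h0
          rw [h0, mul_zero] at h1
          exact one_ne_zero h1.symm
        have : (lam r - lam s) * star (lam s) = 0 := by
          rw [sub_mul, h1, hss, sub_self]
        rcases mul_eq_zero.mp this with h2 | h2
        · exact sub_eq_zero.mp h2
        · exact absurd h2 hstar
      · rintro rfl; exact hss
    have := cesaro_geom (lam r * star (lam s)) hmod
    rwa [if_congr hiff rfl rfl] at this
  have hfinal :
      Tendsto (fun T : ℕ => ∑ r, ∑ s, ((F r).mulVec v i * star ((F s).mulVec v i)) *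
          ((T : ℂ)⁻¹ * ∑ t ∈ Finset.range T, (lam r * star (lam s)) ^ t)) atTop
        (nhds (∑ r, ∑ s, ((F r).mulVec v i * star ((F s).mulVec v i)) *
          (if r = s then 1 else 0))) :=
    tendsto_finset_sum _ fun r _ => tendsto_finset_sum _ fun s _ => (hconv r s).const_mul _
  have hlim : (∑ r, ((F r).mulVec v i * star ((F r).mulVec v i)))
      = ∑ r, ∑ s, ((F r).mulVec v i * star ((F s).mulVec v i)) * (if r = s then 1 else 0) := by
    refine Finset.sum_congr rfl fun r _ => ?_
    rw [Finset.sum_eq_single r]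
    · simp
    · intro s _ hs; simp [Ne.symm hs]
    · intro h; exact absurd (Finset.mem_univ r) h
  rw [hlim]
  exact hfinal.congr fun T => (key T).symm
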